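/- Let d ≥ 5 and β_d = 1/I(0). Then the function ψ : ℤ^d → ℝ defined by ψ(x) = β_d (2π)^{−d} ∫_{[−π,π]^d} cos⟨φ,x⟩/Φ(φ) dφ belongs to ℓ²(ℤ^d), satisfies ψ(0) = 1, and is an eigenfunction of H_{β_d} with eigenvalue 0: H_{β_d} ψ = 0. In other words, for d ≥ 5 the critical operator H_{β_d} has 0 as an ℓ²-eigenvalue at the edge of its essential spectrum. -/

import Mathlib

open MeasureTheory Real Filter Set
open scoped ComplexConjugate
open scoped ENNReal

noncomputable section

/-- The Fourier symbol `Φ(φ) = 2 ∑_j (1 - cos φ_j)` of the negative discrete Laplacian on `ℤ^d`. -/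
def Phi (d : ℕ) (φ : Fin d → ℝ) : ℝ := 2 * ∑ j, (1 - Real.cos (φ j))

/-- The cube `[-π, π]^d`. -/
def cube (d : ℕ) : Set (Fin d → ℝ) := Set.univ.pi fun _ => Set.Icc (-π) π

/-- `I(λ) = (2π)^{-d} ∫_{[-π,π]^d} (λ + Φ(φ))⁻¹ dφ` (Bochner integral, real-valued). -/
def Ir (d : ℕ) (lam : ℝ) : ℝ := ((2 * π) ^ d)⁻¹ * ∫ φ in cube d, (lam + Phi d φ)⁻¹

/-- The lattice `ℤ^d`. -/
abbrev Zd (d : ℕ) := Fin d → ℤ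

/-- The Hilbert space `ℓ²(ℤ^d)` of real square-summable sequences. -/
abbrev l2 (d : ℕ) := lp (fun _ : Zd d => ℝ) 2

/-- The indicator `δ_x ∈ ℓ²(ℤ^d)` of the point `x`. -/
def delta (d : ℕ) (x : Zd d) : l2 d := lp.single 2 x 1

/-- The pointwise action of `H_β = Δ + β δ₀`:
`(H_β f)(x) = ∑_{y : |y-x|=1} (f y - f x) + β·1_{x=0}·f x`, where the sum over the `2d`
nearest neighbours is written out explicitly. -/
def Hform (d : ℕ) (β : ℝ) (f : Zd d → ℝ) (x : Zd d) : ℝ :=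
  (∑ i : Fin d, (f (Function.update x i (x i + 1)) + f (Function.update x i (x i - 1))))
    - 2 * d * f x + β * (if x = 0 then f x else 0)

/-- `H` is the bounded operator `H_β` on `ℓ²(ℤ^d)`. -/
def IsHamiltonian (d : ℕ) (β : ℝ) (H : l2 d →L[ℝ] l2 d) : Prop :=
  ∀ (f : l2 d) (x : Zd d), H f x = Hform d β (⇑f) x

/-- Heat kernel `p_β(t,x,y) = ⟨exp(t H_β) δ_y, δ_x⟩`. -/
def heatKernel (d : ℕ) (H : l2 d →L[ℝ] l2 d) (t : ℝ) (x y : Zd d) : ℝ :=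
  inner ℝ (NormedSpace.exp (t • H) (delta d y)) (delta d x)

/-- The candidate eigenfunction: `ψ(x) = β (2π)^{-d} ∫_{[-π,π]^d} cos⟨φ,x⟩/(λ₀ + Φ(φ)) dφ`. -/
def psiFun (d : ℕ) (β lam0 : ℝ) (x : Zd d) : ℝ :=
  β * (((2 * π) ^ d)⁻¹ *
    ∫ φ in cube d, Real.cos (∑ i, φ i * (x i : ℝ)) / (lam0 + Phi d φ))

-- basic facts
lemma measurableSet_cube (d : ℕ) : MeasurableSet (cube d) :=
  MeasurableSet.univ_pi fun _ => measurableSet_Icc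

lemma isCompact_cube (d : ℕ) : IsCompact (cube d) :=
  isCompact_univ_pi fun _ => isCompact_Icc

lemma Phi_continuous (d : ℕ) : Continuous (Phi d) := by
  unfold Phi
  fun_prop

lemma Phi_nonneg (d : ℕ) (φ : Fin d → ℝ) : 0 ≤ Phi d φ := by
  unfold Phi
  have h : ∀ j : Fin d, (0:ℝ) ≤ 1 - Real.cos (φ j) := fun j => by
    nlinarith [Real.cos_le_one (φ j)]
  have := Finset.sum_nonneg (fun j (_ : j ∈ Finset.univ) => h j)
  linarith

lemma one_sub_cos_ge {t : ℝ} (h1 : -π ≤ t) (h2 : t ≤ π) :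
    t ^ 2 * (2 / π ^ 2) ≤ 1 - Real.cos t := by
  have hπ := Real.pi_pos
  have key : ∀ s : ℝ, 0 ≤ s → s ≤ π → s ^ 2 * (2 / π ^ 2) ≤ 1 - Real.cos s := by
    intro s h0 h1
    have hsin : s / π ≤ Real.sin (s / 2) := by
      have := Real.mul_le_sin (x := s / 2) (by linarith) (by linarith)
      calc s / π = 2 / π * (s / 2) := by ring
        _ ≤ Real.sin (s / 2) := this
    have hsq : (s / π) ^ 2 ≤ Real.sin (s / 2) ^ 2 := by
      have h0' : 0 ≤ s / π := by positivity
      nlinarith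
    have hcos : Real.sin (s / 2) ^ 2 = 1 / 2 - Real.cos s / 2 := by
      have := Real.sin_sq_eq_half_sub (s / 2)
      rw [this]; ring_nf
    rw [hcos] at hsq
    have e : s ^ 2 * (2 / π ^ 2) = 2 * ((s / π) ^ 2) := by
      field_simp
    rw [e]; linarith
  rcases le_or_gt 0 t with ht | ht
  · exact key t ht h2
  · have := key (-t) (by linarith) (by linarith)
    simpa [Real.cos_neg] using this

lemma sum_sq_le_Phi (d : ℕ) {φ : Fin d → ℝ} (hφ : φ ∈ cube d) :
    (∑ j, (φ j) ^ 2) * (4 / π ^ 2) ≤ Phi d φ := by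
  unfold Phi
  have h : ∀ j : Fin d, (φ j) ^ 2 * (2 / π ^ 2) ≤ 1 - Real.cos (φ j) := by
    intro j
    have := hφ j (Set.mem_univ j)
    exact one_sub_cos_ge this.1 this.2
  have := Finset.sum_le_sum (fun j (_ : j ∈ Finset.univ) => h j)
  rw [← Finset.sum_mul] at this
  have e : (∑ j, (φ j) ^ 2) * (4 / π ^ 2) = 2 * ((∑ j, (φ j) ^ 2) * (2 / π ^ 2)) := by ring
  rw [e]; linarith

lemma Phi_pos (d : ℕ) {φ : Fin d → ℝ} (hφ : φ ∈ cube d) (hne : φ ≠ 0) :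
    0 < Phi d φ := by
  have h := sum_sq_le_Phi d hφ
  have hπ := Real.pi_pos
  have hsum : 0 < ∑ j, (φ j) ^ 2 := by
    have : ∃ j, φ j ≠ 0 := by
      by_contra hcon
      push_neg at hcon
      exact hne (funext hcon)
    obtain ⟨j, hj⟩ := this
    have : 0 < (φ j) ^ 2 := by positivity
    exact Finset.sum_pos' (fun i _ => by positivity) ⟨j, Finset.mem_univ j, this⟩
  have : 0 < (∑ j, (φ j) ^ 2) * (4 / π ^ 2) := by
    apply mul_pos hsum; positivity
  linarith

-- AM-GM lower bound
lemma prod_rpow_le_Phi (d : ℕ) (hd : 1 ≤ d) {φ : Fin d → ℝ} (hφ : φ ∈ cube d) :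
    (∏ j, |φ j| ^ ((2:ℝ) / d)) * (4 / π ^ 2) ≤ Phi d φ := by
  have hd0 : (0:ℝ) < d := by exact_mod_cast hd
  have hgm : (∏ j, ((φ j) ^ 2) ^ ((1:ℝ)/d)) ≤ ∑ j, (1/(d:ℝ)) * (φ j) ^ 2 := by
    apply Real.geom_mean_le_arith_mean_weighted
    · intro i _; positivity
    · rw [Finset.sum_const, Finset.card_univ, Fintype.card_fin, nsmul_eq_mul]
      field_simp
    · intro i _; positivity
  have hprod : (∏ j, |φ j| ^ ((2:ℝ) / d)) = ∏ j, ((φ j) ^ 2) ^ ((1:ℝ)/d) := by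
    apply Finset.prod_congr rfl
    intro j _
    rw [← sq_abs (φ j), ← Real.rpow_natCast |φ j| 2, ← Real.rpow_mul (abs_nonneg _)]
    norm_num
    rw [div_eq_mul_inv]
  have hsum : ∑ j, (1/(d:ℝ)) * (φ j) ^ 2 ≤ ∑ j, (φ j) ^ 2 := by
    apply Finset.sum_le_sum
    intro j _
    have h1 : (1/(d:ℝ)) ≤ 1 := by
      rw [div_le_one hd0]; exact_mod_cast hd
    nlinarith [sq_nonneg (φ j)]
  have := sum_sq_le_Phi d hφ
  have hπ := Real.pi_pos
  have h4 : (0:ℝ) < 4 / π ^ 2 := by positivity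
  calc (∏ j, |φ j| ^ ((2:ℝ) / d)) * (4 / π ^ 2)
      ≤ (∑ j, (φ j) ^ 2) * (4 / π ^ 2) := by
        apply mul_le_mul_of_nonneg_right _ h4.le
        rw [hprod]
        exact hgm.trans hsum
    _ ≤ Phi d φ := this


lemma absRpow_integrableOn {r : ℝ} (hr : -1 < r) :
    IntegrableOn (fun t : ℝ => |t| ^ r) (Set.Icc (-π) π) := by
  have hπ := Real.pi_pos
  have h1 : IntegrableOn (fun t : ℝ => |t| ^ r) (Set.Ioc 0 π) := by
    have h := intervalIntegral.intervalIntegrable_rpow' (a := 0) (b := π) hr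
    rw [intervalIntegrable_iff_integrableOn_Ioc_of_le hπ.le] at h
    exact h.congr_fun (fun x hx => by rw [abs_of_pos hx.1]) measurableSet_Ioc
  have h2 : IntegrableOn (fun t : ℝ => |t| ^ r) (Set.Ico 0 π) := by
    rw [integrableOn_Ico_iff_integrableOn_Ioo]
    exact h1.mono_set Set.Ioo_subset_Ioc_self
  have h3 : IntegrableOn (fun t : ℝ => |t| ^ r) (Set.Ioc (-π) 0) := by
    have := (MeasurePreserving.integrableOn_comp_preimage
      (Measure.measurePreserving_neg (volume : Measure ℝ))
      (Homeomorph.neg ℝ).measurableEmbedding).2 h2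
    have hset : (Neg.neg ⁻¹' Set.Ico (0:ℝ) π) = Set.Ioc (-π) 0 := by
      ext x
      simp only [Set.mem_preimage, Set.mem_Ico, Set.mem_Ioc]
      constructor
      · rintro ⟨a, b⟩; constructor <;> linarith
      · rintro ⟨a, b⟩; constructor <;> linarith
    have hfun : ((fun t : ℝ => |t| ^ r) ∘ Neg.neg) = fun t : ℝ => |t| ^ r := by
      funext t; simp [abs_neg]
    rw [hset, hfun] at this
    exact this
  have h4 : IntegrableOn (fun t : ℝ => |t| ^ r) (Set.Ioc (-π) π) := by
    have : Set.Ioc (-π) π = Set.Ioc (-π) 0 ∪ Set.Ioc 0 π := by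
      rw [Set.Ioc_union_Ioc_eq_Ioc] <;> linarith
    rw [this]
    exact h3.union h1
  rwa [integrableOn_Icc_iff_integrableOn_Ioc]

lemma dom_integrableOn (d : ℕ) {a : ℝ} (ha : -1 < a) :
    IntegrableOn (fun φ : Fin d → ℝ => ∏ j, |φ j| ^ a) (cube d) := by
  set w : ℝ → ℝ := Set.indicator (Set.Icc (-π) π) (fun t => |t| ^ a) with hw
  have hwint : Integrable w := by
    rw [hw, integrable_indicator_iff measurableSet_Icc]
    exact absRpow_integrableOn ha
  have hprod : Integrable (fun φ : Fin d → ℝ => ∏ j, w (φ j)) :=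
    Integrable.fintype_prod (𝕜 := ℝ) (fun _ => hwint)
  have key : (fun φ : Fin d → ℝ => ∏ j, w (φ j))
      = Set.indicator (cube d) (fun φ => ∏ j, |φ j| ^ a) := by
    funext φ
    by_cases h : φ ∈ cube d
    · rw [Set.indicator_of_mem h]
      apply Finset.prod_congr rfl
      intro j _
      exact Set.indicator_of_mem (h j (Set.mem_univ j)) _
    · rw [Set.indicator_of_notMem h]
      have : ∃ j, φ j ∉ Set.Icc (-π) π := by
        by_contra hcon
        push_neg at hcon
        exact h (fun j _ => hcon j)
      obtain ⟨j, hj⟩ := this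
      apply Finset.prod_eq_zero (Finset.mem_univ j)
      exact Set.indicator_of_notMem hj _
    
  rw [key, integrable_indicator_iff (measurableSet_cube d)] at hprod
  exact hprod

lemma ae_ne_zero (d : ℕ) :
    ∀ᵐ φ : Fin d → ℝ ∂(volume.restrict (cube d)), ∀ j, φ j ≠ 0 := by
  apply ae_restrict_of_ae
  rw [ae_all_iff]
  intro j
  rw [volume_pi]
  exact Measure.ae_eval_ne _ j 0

lemma inv_Phi_le (d : ℕ) (hd : 1 ≤ d) {φ : Fin d → ℝ} (hφ : φ ∈ cube d)
    (hne : ∀ j, φ j ≠ 0) :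
    (Phi d φ)⁻¹ ≤ (π ^ 2 / 4) * ∏ j, |φ j| ^ (-((2:ℝ) / d)) := by
  have hπ := Real.pi_pos
  have hP : 0 < ∏ j, |φ j| ^ ((2:ℝ) / d) :=
    Finset.prod_pos fun j _ => Real.rpow_pos_of_pos (abs_pos.2 (hne j)) _
  have hlow := prod_rpow_le_Phi d hd hφ
  have h0 : 0 < (∏ j, |φ j| ^ ((2:ℝ) / d)) * (4 / π ^ 2) := by
    apply mul_pos hP; positivity
  have hinv : (Phi d φ)⁻¹ ≤ ((∏ j, |φ j| ^ ((2:ℝ) / d)) * (4 / π ^ 2))⁻¹ :=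
    inv_anti₀ h0 hlow
  have heq : ((∏ j, |φ j| ^ ((2:ℝ) / d)) * (4 / π ^ 2))⁻¹
      = (π ^ 2 / 4) * ∏ j, |φ j| ^ (-((2:ℝ) / d)) := by
    rw [mul_inv]
    have : (∏ j, |φ j| ^ ((2:ℝ) / d))⁻¹ = ∏ j, |φ j| ^ (-((2:ℝ) / d)) := by
      rw [← Finset.prod_inv_distrib]
      apply Finset.prod_congr rfl
      intro j _
      rw [← Real.rpow_neg (abs_nonneg _)]
    rw [this]
    field_simp
  rw [heq] at hinv
  exact hinv

lemma inv_Phi_integrableOn (d : ℕ) (hd : 3 ≤ d) :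
    IntegrableOn (fun φ => (Phi d φ)⁻¹) (cube d) := by
  have hd1 : 1 ≤ d := by omega
  have ha : (-1:ℝ) < -((2:ℝ) / d) := by
    have : (2:ℝ) / d < 1 := by
      rw [div_lt_one (by positivity)]
      exact_mod_cast by omega
    linarith
  have hdom := (dom_integrableOn d ha).const_mul (π ^ 2 / 4)
  apply Integrable.mono hdom
  · exact ((Phi_continuous d).measurable.inv).aestronglyMeasurable
  · filter_upwards [ae_restrict_mem (measurableSet_cube d), ae_ne_zero d] with φ hmem hne
    rw [Real.norm_eq_abs, Real.norm_eq_abs, abs_of_nonneg (inv_nonneg.2 (Phi_nonneg d φ)),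
      abs_of_nonneg]
    · exact inv_Phi_le d hd1 hmem hne
    · apply mul_nonneg (by positivity)
      exact Finset.prod_nonneg fun j _ => Real.rpow_nonneg (abs_nonneg _) _

lemma inv_Phi_sq_integrableOn (d : ℕ) (hd : 5 ≤ d) :
    IntegrableOn (fun φ => ((Phi d φ)⁻¹) ^ 2) (cube d) := by
  have hd1 : 1 ≤ d := by omega
  have ha : (-1:ℝ) < -((4:ℝ) / d) := by
    have : (4:ℝ) / d < 1 := by
      rw [div_lt_one (by positivity)]
      exact_mod_cast by omega
    linarith
  have hdom := (dom_integrableOn d ha).const_mul ((π ^ 2 / 4) ^ 2)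
  apply Integrable.mono hdom
  · exact (((Phi_continuous d).measurable.inv).pow_const 2).aestronglyMeasurable
  · filter_upwards [ae_restrict_mem (measurableSet_cube d), ae_ne_zero d] with φ hmem hne
    have h1 := inv_Phi_le d hd1 hmem hne
    have h2 : 0 ≤ (Phi d φ)⁻¹ := inv_nonneg.2 (Phi_nonneg d φ)
    rw [Real.norm_eq_abs, Real.norm_eq_abs, abs_of_nonneg (by positivity : (0:ℝ) ≤ ((Phi d φ)⁻¹) ^ 2),
      abs_of_nonneg]
    · calc ((Phi d φ)⁻¹) ^ 2 ≤ ((π ^ 2 / 4) * ∏ j, |φ j| ^ (-((2:ℝ) / d))) ^ 2 := by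
            apply pow_le_pow_left₀ h2 h1
        _ = (π ^ 2 / 4) ^ 2 * ∏ j, |φ j| ^ (-((4:ℝ) / d)) := by
            rw [mul_pow, ← Finset.prod_pow]
            congr 1
            apply Finset.prod_congr rfl
            intro j _
            rw [← Real.rpow_natCast (|φ j| ^ (-((2:ℝ)/d))) 2, ← Real.rpow_mul (abs_nonneg _)]
            norm_num
            ring_nf
    · apply mul_nonneg (by positivity)
      exact Finset.prod_nonneg fun j _ => Real.rpow_nonneg (abs_nonneg _) _


lemma integral_inv_Phi_pos (d : ℕ) (hd : 3 ≤ d) :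
    0 < ∫ φ in cube d, (Phi d φ)⁻¹ := by
  have hπ := Real.pi_pos
  rw [setIntegral_pos_iff_support_of_nonneg_ae
    (ae_of_all _ fun φ => inv_nonneg.2 (Phi_nonneg d φ)) (inv_Phi_integrableOn d hd)]
  have hsub : (Set.univ.pi fun _ : Fin d => Set.Ioo (0:ℝ) π)
      ⊆ Function.support (fun φ => (Phi d φ)⁻¹) ∩ cube d := by
    intro φ hφ
    have hmem : φ ∈ cube d := by
      intro j _
      have := hφ j (Set.mem_univ j)
      exact ⟨by linarith [this.1], this.2.le⟩
    have hne : φ ≠ 0 := by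
      intro hcon
      have := hφ ⟨0, by omega⟩ (Set.mem_univ _)
      rw [hcon] at this
      exact lt_irrefl 0 this.1
    refine ⟨?_, hmem⟩
    simp only [Function.mem_support]
    exact (inv_pos.2 (Phi_pos d hmem hne)).ne'
  apply lt_of_lt_of_le _ (measure_mono hsub)
  rw [volume_pi_pi]
  simp only [Real.volume_Ioo, sub_zero]
  apply CanonicallyOrderedAdd.prod_pos.2
  intro i _
  exact ENNReal.ofReal_pos.2 hπ


lemma integral_exp_Icc (n : ℤ) :
    ∫ t in Set.Icc (-π) π, Complex.exp (t * n * Complex.I)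
      = if n = 0 then ((2 * π : ℝ) : ℂ) else 0 := by
  have hπ := Real.pi_pos
  rw [integral_Icc_eq_integral_Ioc,
    ← intervalIntegral.integral_of_le (by linarith : -π ≤ π)]
  by_cases hn : n = 0
  · subst hn
    simp only [Int.cast_zero, mul_zero, zero_mul, Complex.exp_zero]
    rw [intervalIntegral.integral_const]
    simp
    push_cast
    ring
  · have hc : ((n:ℂ) * Complex.I) ≠ 0 := by
      simp [Complex.I_ne_zero, hn]
    have hrw : ∀ t : ℝ, (t:ℂ) * n * Complex.I = (n * Complex.I) * t := fun t => by ring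
    simp_rw [hrw]
    rw [integral_exp_mul_complex hc]
    have e1 : (n:ℂ) * Complex.I * (π:ℂ) = ((n:ℂ) * (π:ℂ)) * Complex.I := by ring
    have e2 : (n:ℂ) * Complex.I * ((-π:ℝ):ℂ) = (-((n:ℂ) * (π:ℂ))) * Complex.I := by
      push_cast; ring
    rw [e1, e2, Complex.exp_mul_I, Complex.exp_mul_I, Complex.cos_neg, Complex.sin_neg,
      Complex.sin_int_mul_pi]
    simp [hn]

lemma integral_exp_cube (d : ℕ) (z : Zd d) :
    ∫ φ in cube d, Complex.exp ((∑ i, φ i * (z i : ℝ) : ℝ) * Complex.I)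
      = if z = 0 then (((2 * π) ^ d : ℝ) : ℂ) else 0 := by
  rw [← integral_indicator (measurableSet_cube d)]
  have key : Set.indicator (cube d)
        (fun φ : Fin d → ℝ => Complex.exp ((∑ i, φ i * (z i : ℝ) : ℝ) * Complex.I))
      = fun φ : Fin d → ℝ => ∏ j,
          (Set.indicator (Set.Icc (-π) π)
            (fun t : ℝ => Complex.exp (t * (z j : ℝ) * Complex.I))) (φ j) := by
    funext φ
    by_cases h : φ ∈ cube d
    · rw [Set.indicator_of_mem h]
      have : ∀ j : Fin d, (Set.indicator (Set.Icc (-π) π)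
            (fun t : ℝ => Complex.exp (t * (z j : ℝ) * Complex.I))) (φ j)
          = Complex.exp (φ j * (z j : ℝ) * Complex.I) := fun j =>
        Set.indicator_of_mem (h j (Set.mem_univ j)) _
      simp_rw [this]
      rw [← Complex.exp_sum]
      congr 1
      push_cast
      rw [Finset.sum_mul]
    · rw [Set.indicator_of_notMem h]
      have : ∃ j : Fin d, φ j ∉ Set.Icc (-π) π := by
        by_contra hcon
        push_neg at hcon
        exact h (fun j _ => hcon j)
      obtain ⟨j, hj⟩ := this
      symm
      apply Finset.prod_eq_zero (Finset.mem_univ j)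
      exact Set.indicator_of_notMem hj _
  rw [key, volume_pi, MeasureTheory.integral_fintype_prod_eq_prod (𝕜 := ℂ)
    (f := fun (j : Fin d) => (Set.indicator (Set.Icc (-π) π)
      (fun t : ℝ => Complex.exp (t * (z j : ℝ) * Complex.I))))]
  have hfac : ∀ j : Fin d, (∫ t : ℝ, (Set.indicator (Set.Icc (-π) π)
        (fun t : ℝ => Complex.exp (t * (z j : ℝ) * Complex.I))) t)
      = if z j = 0 then ((2 * π : ℝ) : ℂ) else 0 := by
    intro j
    rw [integral_indicator measurableSet_Icc]
    have : ∀ t : ℝ, (t : ℂ) * ((z j : ℝ) : ℂ) * Complex.I = t * (z j : ℤ) * Complex.I := by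
      intro t; push_cast; ring
    simp_rw [this]
    exact integral_exp_Icc (z j)
  simp_rw [hfac]
  by_cases hz : z = 0
  · subst hz
    simp only [Pi.zero_apply, if_pos rfl]
    rw [Finset.prod_const]
    push_cast
    simp
  · have : ∃ j : Fin d, z j ≠ 0 := by
      by_contra hcon
      push_neg at hcon
      exact hz (funext hcon)
    obtain ⟨j, hj⟩ := this
    rw [if_neg hz]
    apply Finset.prod_eq_zero (Finset.mem_univ j)
    rw [if_neg hj]

lemma integrableOn_exp_cube (d : ℕ) (z : Zd d) :
    IntegrableOn (fun φ : Fin d → ℝ =>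
      Complex.exp ((∑ i, φ i * (z i : ℝ) : ℝ) * Complex.I)) (cube d) := by
  apply ContinuousOn.integrableOn_compact (isCompact_cube d)
  apply Continuous.continuousOn
  apply Complex.continuous_exp.comp
  apply Continuous.mul _ continuous_const
  exact Complex.continuous_ofReal.comp
    (continuous_finset_sum _ fun i _ => (continuous_apply i).mul continuous_const)

lemma integral_cos_cube (d : ℕ) (z : Zd d) :
    ∫ φ in cube d, Real.cos (∑ i, φ i * (z i : ℝ))
      = if z = 0 then (2 * π) ^ d else 0 := by
  have h1 : ∀ φ : Fin d → ℝ, Real.cos (∑ i, φ i * (z i : ℝ))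
      = RCLike.re (Complex.exp ((∑ i, φ i * (z i : ℝ) : ℝ) * Complex.I)) := by
    intro φ
    rw [RCLike.re_to_complex, Complex.exp_ofReal_mul_I_re]
  simp_rw [h1]
  rw [integral_re (integrableOn_exp_cube d z), integral_exp_cube]
  by_cases hz : z = 0 <;> simp only [hz, if_true, if_false, Complex.zero_re, RCLike.re_to_complex]
  · norm_cast


/-- `⟨φ, z⟩ = ∑ i, φ i * z i`. -/
def thSum (d : ℕ) (z : Zd d) (φ : Fin d → ℝ) : ℝ := ∑ i, φ i * (z i : ℝ)

/-- `cInt d z = ∫_{cube} cos⟨φ,z⟩ / Φ(φ) dφ`. -/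
def cInt (d : ℕ) (z : Zd d) : ℝ := ∫ φ in cube d, Real.cos (thSum d z φ) / Phi d φ

lemma thSum_update (d : ℕ) (x : Zd d) (i : Fin d) (v : ℤ) (φ : Fin d → ℝ) :
    thSum d (Function.update x i v) φ = thSum d x φ + φ i * ((v : ℝ) - (x i : ℝ)) := by
  unfold thSum
  have h : ∀ k : Fin d, φ k * ((Function.update x i v k : ℤ) : ℝ)
      = Function.update (fun k => φ k * (x k : ℝ)) i (φ i * (v : ℝ)) k := by
    intro k
    by_cases hk : k = i
    · subst hk; simp
    · simp [Function.update_of_ne hk]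
  rw [Finset.sum_congr rfl (fun k _ => h k),
    Finset.sum_update_of_mem (Finset.mem_univ i),
    ← Finset.sum_erase_add Finset.univ (fun k => φ k * (x k : ℝ)) (Finset.mem_univ i),
    Finset.sdiff_singleton_eq_erase]
  ring

lemma div_Phi_integrable (d : ℕ) (hd : 3 ≤ d) (F : (Fin d → ℝ) → ℝ) (C : ℝ)
    (hF : Measurable F) (hb : ∀ φ, |F φ| ≤ C) :
    IntegrableOn (fun φ => F φ / Phi d φ) (cube d) := by
  apply Integrable.mono ((inv_Phi_integrableOn d hd).const_mul C)
  · exact (hF.div (Phi_continuous d).measurable).aestronglyMeasurable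
  · apply ae_of_all
    intro φ
    have h0 : (0:ℝ) ≤ (Phi d φ)⁻¹ := inv_nonneg.2 (Phi_nonneg d φ)
    have hC : 0 ≤ C := le_trans (abs_nonneg _) (hb φ)
    rw [Real.norm_eq_abs, Real.norm_eq_abs, div_eq_mul_inv, abs_mul,
      abs_of_nonneg h0, abs_of_nonneg (by positivity : (0:ℝ) ≤ C * (Phi d φ)⁻¹)]
    exact mul_le_mul_of_nonneg_right (hb φ) h0

lemma cos_div_Phi_integrable (d : ℕ) (hd : 3 ≤ d) (z : Zd d) :
    IntegrableOn (fun φ => Real.cos (thSum d z φ) / Phi d φ) (cube d) := by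
  apply div_Phi_integrable d hd _ 1
  · apply Measurable.cos
    unfold thSum
    exact Finset.measurable_sum _ fun i _ => (measurable_pi_apply i).mul measurable_const
  · exact fun φ => Real.abs_cos_le_one _

lemma key_sum (d : ℕ) (hd : 3 ≤ d) (x : Zd d) :
    (∑ i : Fin d, (cInt d (Function.update x i (x i + 1))
        + cInt d (Function.update x i (x i - 1))))
      - 2 * (d : ℝ) * cInt d x = -(if x = 0 then (2 * π) ^ d else 0) := by
  have hmeas := measurableSet_cube d
  -- Step 1: pair sums
  have step1 : ∀ i : Fin d, cInt d (Function.update x i (x i + 1))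
      + cInt d (Function.update x i (x i - 1))
      = ∫ φ in cube d, (2 * Real.cos (thSum d x φ) * Real.cos (φ i)) / Phi d φ := by
    intro i
    unfold cInt
    rw [← integral_add (cos_div_Phi_integrable d hd _) (cos_div_Phi_integrable d hd _)]
    apply setIntegral_congr_fun hmeas
    intro φ _
    dsimp only
    have h1 : thSum d (Function.update x i (x i + 1)) φ = thSum d x φ + φ i := by
      rw [thSum_update]; push_cast; ring
    have h2 : thSum d (Function.update x i (x i - 1)) φ = thSum d x φ - φ i := by
      rw [thSum_update]; push_cast; ring
    rw [h1, h2, ← add_div]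
    congr 1
    rw [Real.cos_add, Real.cos_sub]
    ring
  -- Step 2 + 3: combine into a single integral
  have hintsum : IntegrableOn
      (fun φ => ∑ i : Fin d, (2 * Real.cos (thSum d x φ) * Real.cos (φ i)) / Phi d φ)
      (cube d) := by
    apply integrable_finset_sum
    intro i _
    apply div_Phi_integrable d hd _ 2
    · apply Measurable.mul
      · apply Measurable.const_mul
        apply Measurable.cos
        exact Finset.measurable_sum _ fun k _ => (measurable_pi_apply k).mul measurable_const
      · exact (measurable_pi_apply i).cos
    · intro φ
      rw [abs_mul, abs_mul, abs_two]
      calc 2 * |Real.cos (thSum d x φ)| * |Real.cos (φ i)| ≤ 2 * 1 * 1 := by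
            apply mul_le_mul _ (Real.abs_cos_le_one _) (abs_nonneg _) (by norm_num)
            apply mul_le_mul_of_nonneg_left (Real.abs_cos_le_one _) (by norm_num)
        _ = 2 := by norm_num
  have step2 : (∑ i : Fin d, (cInt d (Function.update x i (x i + 1))
        + cInt d (Function.update x i (x i - 1))))
      - 2 * (d : ℝ) * cInt d x
      = ∫ φ in cube d,
          ((∑ i : Fin d, (2 * Real.cos (thSum d x φ) * Real.cos (φ i)) / Phi d φ)
            - 2 * (d : ℝ) * (Real.cos (thSum d x φ) / Phi d φ)) := by
    rw [integral_sub hintsum (((cos_div_Phi_integrable d hd x)).const_mul _)]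
    congr 1
    · rw [Finset.sum_congr rfl (fun i _ => step1 i), ← integral_finset_sum]
      intro i _
      apply div_Phi_integrable d hd _ 2
      · apply Measurable.mul
        · apply Measurable.const_mul
          apply Measurable.cos
          exact Finset.measurable_sum _ fun k _ => (measurable_pi_apply k).mul measurable_const
        · exact (measurable_pi_apply i).cos
      · intro φ
        rw [abs_mul, abs_mul, abs_two]
        calc 2 * |Real.cos (thSum d x φ)| * |Real.cos (φ i)| ≤ 2 * 1 * 1 := by
              apply mul_le_mul _ (Real.abs_cos_le_one _) (abs_nonneg _) (by norm_num)
              apply mul_le_mul_of_nonneg_left (Real.abs_cos_le_one _) (by norm_num)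
          _ = 2 := by norm_num
    · unfold cInt
      rw [← integral_const_mul]
  rw [step2]
  -- Step 4: a.e. the integrand is -cos θ
  have step4 : ∫ φ in cube d,
        ((∑ i : Fin d, (2 * Real.cos (thSum d x φ) * Real.cos (φ i)) / Phi d φ)
          - 2 * (d : ℝ) * (Real.cos (thSum d x φ) / Phi d φ))
      = ∫ φ in cube d, -Real.cos (thSum d x φ) := by
    apply integral_congr_ae
    filter_upwards [ae_restrict_mem hmeas, ae_ne_zero d] with φ hmem hne
    have hφne : φ ≠ 0 := by
      intro hcon
      have hd1 : 0 < d := by omega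
      exact hne ⟨0, hd1⟩ (by rw [hcon]; rfl)
    have hΦ : 0 < Phi d φ := Phi_pos d hmem hφne
    have hΦne : Phi d φ ≠ 0 := hΦ.ne'
    have hPhi' : Phi d φ = 2 * ((d : ℝ) - ∑ i, Real.cos (φ i)) := by
      unfold Phi
      rw [Finset.sum_sub_distrib, Finset.sum_const, Finset.card_univ, Fintype.card_fin]
      push_cast
      ring
    rw [← Finset.sum_div]
    have hnum : ∑ i : Fin d, 2 * Real.cos (thSum d x φ) * Real.cos (φ i)
        = 2 * Real.cos (thSum d x φ) * ∑ i, Real.cos (φ i) := by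
      rw [Finset.mul_sum]
    rw [hnum]
    have h2 : (d : ℝ) - ∑ i, Real.cos (φ i) ≠ 0 := by
      intro h
      apply hΦne
      rw [hPhi', h]
      ring
    rw [hPhi']
    field_simp
    ring
  rw [step4, integral_neg]
  simp only [thSum]
  rw [integral_cos_cube]

-- ψ(0) = 1 and the eigen-equation
lemma psiFun_eq (d : ℕ) (β : ℝ) (y : Zd d) :
    psiFun d β 0 y = β * (((2 * π) ^ d)⁻¹ * cInt d y) := by
  unfold psiFun cInt thSum
  simp_rw [zero_add]

lemma cInt_zero (d : ℕ) : cInt d 0 = ∫ φ in cube d, (Phi d φ)⁻¹ := by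
  unfold cInt thSum
  have : ∀ φ : Fin d → ℝ, Real.cos (∑ i, φ i * (((0:Zd d) i : ℤ) : ℝ)) / Phi d φ
      = (Phi d φ)⁻¹ := by
    intro φ
    simp
  simp_rw [this]


lemma Ir_pos (d : ℕ) (hd : 3 ≤ d) : 0 < Ir d 0 := by
  unfold Ir
  simp_rw [zero_add]
  have hπ := Real.pi_pos
  have := integral_inv_Phi_pos d hd
  positivity

lemma psi_zero_eq_one (d : ℕ) (hd : 3 ≤ d) (βd : ℝ) (hβd : βd = (Ir d 0)⁻¹) :
    psiFun d βd 0 0 = 1 := by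
  rw [psiFun_eq, cInt_zero, hβd]
  have h : ((2 * π) ^ d)⁻¹ * ∫ φ in cube d, (Phi d φ)⁻¹ = Ir d 0 := by
    unfold Ir
    simp_rw [zero_add]
  rw [h]
  exact inv_mul_cancel₀ (Ir_pos d hd).ne'

lemma Hform_eigen (d : ℕ) (hd : 3 ≤ d) (βd : ℝ) (hβd : βd = (Ir d 0)⁻¹) (x : Zd d) :
    Hform d βd (psiFun d βd 0) x = 0 := by
  have hπ := Real.pi_pos
  have hK : ((2 * π : ℝ) ^ d) ≠ 0 := by positivity
  unfold Hform
  simp_rw [psiFun_eq d βd]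
  set K : ℝ := ((2 * π) ^ d)⁻¹ with hKdef
  have hsum : (∑ i : Fin d, (βd * (K * cInt d (Function.update x i (x i + 1)))
      + βd * (K * cInt d (Function.update x i (x i - 1)))))
      = βd * K * (∑ i : Fin d, (cInt d (Function.update x i (x i + 1))
          + cInt d (Function.update x i (x i - 1)))) := by
    rw [Finset.mul_sum]
    apply Finset.sum_congr rfl
    intro i _
    ring
  rw [hsum]
  have hkey := key_sum d hd x
  have hone := psi_zero_eq_one d hd βd hβd
  rw [psiFun_eq, ← hKdef] at hone
  have hKK : K * (2 * π) ^ d = 1 := by rw [hKdef]; exact inv_mul_cancel₀ hK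
  by_cases hx : x = 0
  · subst hx
    rw [if_pos rfl]
    rw [if_pos rfl] at hkey
    linear_combination (βd * K) * hkey + βd * hone - βd * hKK
  · rw [if_neg hx]
    rw [if_neg hx] at hkey
    linear_combination (βd * K) * hkey


-- the exponential functions
def eFun (d : ℕ) (z : Zd d) (φ : Fin d → ℝ) : ℂ :=
  Complex.exp ((thSum d z φ : ℝ) * Complex.I)

lemma thSum_continuous (d : ℕ) (z : Zd d) : Continuous (thSum d z) :=
  continuous_finset_sum _ fun i _ => (continuous_apply i).mul continuous_const

lemma eFun_continuous (d : ℕ) (z : Zd d) : Continuous (eFun d z) :=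
  Complex.continuous_exp.comp
    ((Complex.continuous_ofReal.comp (thSum_continuous d z)).mul continuous_const)

lemma eFun_norm (d : ℕ) (z : Zd d) (φ : Fin d → ℝ) : ‖eFun d z φ‖ = 1 := by
  rw [eFun, Complex.norm_exp_ofReal_mul_I]

lemma thSum_neg (d : ℕ) (z : Zd d) (φ : Fin d → ℝ) :
    thSum d (-z) φ = -thSum d z φ := by
  unfold thSum
  rw [← Finset.sum_neg_distrib]
  apply Finset.sum_congr rfl
  intro i _
  simp only [Pi.neg_apply]
  push_cast
  ring

lemma conj_eFun (d : ℕ) (z : Zd d) (φ : Fin d → ℝ) :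
    conj (eFun d z φ) = eFun d (-z) φ := by
  rw [eFun, eFun, ← Complex.exp_conj]
  congr 1
  rw [map_mul, Complex.conj_I, Complex.conj_ofReal, thSum_neg]
  push_cast
  ring

lemma eFun_mul (d : ℕ) (z w : Zd d) (φ : Fin d → ℝ) :
    eFun d z φ * eFun d w φ = eFun d (z + w) φ := by
  rw [eFun, eFun, eFun, ← Complex.exp_add]
  congr 1
  have : thSum d (z + w) φ = thSum d z φ + thSum d w φ := by
    unfold thSum
    rw [← Finset.sum_add_distrib]
    apply Finset.sum_congr rfl
    intro i _
    simp only [Pi.add_apply]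
    push_cast
    ring
  rw [this]
  push_cast
  ring

theorem psi_summable_sq (d : ℕ) (hd : 5 ≤ d) (C : ℝ) :
    Summable (fun z : Zd d => (C * cInt d z) ^ 2) := by
  have hπ := Real.pi_pos
  set μc : Measure (Fin d → ℝ) := volume.restrict (cube d) with hμc
  haveI : IsFiniteMeasure μc := by
    constructor
    rw [hμc, Measure.restrict_apply_univ]
    exact (isCompact_cube d).measure_lt_top
  -- members of L²
  have hmem : ∀ z : Zd d, MemLp (eFun d z) 2 μc := fun z =>
    MemLp.of_bound (eFun_continuous d z).aestronglyMeasurable 1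
      (ae_of_all _ fun φ => le_of_eq (eFun_norm d z φ))
  have hgmeas : AEStronglyMeasurable (fun φ => ((Phi d φ)⁻¹ : ℂ)) μc :=
    ((Complex.measurable_ofReal.comp (Phi_continuous d).measurable).inv).aestronglyMeasurable
  have hgmem : MemLp (fun φ => ((Phi d φ)⁻¹ : ℂ)) 2 μc := by
    rw [memLp_two_iff_integrable_sq_norm hgmeas]
    have : (fun φ => ‖((Phi d φ)⁻¹ : ℂ)‖ ^ 2) = fun φ => ((Phi d φ)⁻¹) ^ 2 := by
      funext φ
      rw [norm_inv, Complex.norm_real, Real.norm_eq_abs, ← abs_inv, sq_abs]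
    rw [this]
    exact inv_Phi_sq_integrableOn d hd
  -- inner products of toLp elements
  have hinner : ∀ (z w : Zd d),
      (inner ℂ ((hmem z).toLp (eFun d z)) ((hmem w).toLp (eFun d w)) : ℂ)
        = if z = w then (((2 * π) ^ d : ℝ) : ℂ) else 0 := by
    intro z w
    rw [L2.inner_def]
    have : ∫ a, (inner ℂ (((hmem z).toLp (eFun d z) : Lp ℂ 2 μc) a)
          (((hmem w).toLp (eFun d w) : Lp ℂ 2 μc) a) : ℂ) ∂μc
        = ∫ a, conj (eFun d z a) * eFun d w a ∂μc := by
      apply integral_congr_ae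
      filter_upwards [(hmem z).coeFn_toLp, (hmem w).coeFn_toLp] with a h1 h2
      rw [h1, h2, RCLike.inner_apply']
    rw [this]
    have h3 : ∀ a, conj (eFun d z a) * eFun d w a = eFun d (w - z) a := by
      intro a
      rw [conj_eFun, eFun_mul]
      congr 1
      abel
    simp_rw [h3]
    have h4 : (∫ a, eFun d (w - z) a ∂μc)
        = if w - z = 0 then (((2 * π) ^ d : ℝ) : ℂ) else 0 := integral_exp_cube d (w - z)
    rw [h4]
    by_cases hzw : z = w
    · rw [if_pos (by rw [hzw, sub_self]), if_pos hzw]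
    · rw [if_neg (fun h => hzw (sub_eq_zero.1 h).symm), if_neg hzw]
  -- the orthonormal family
  set c₀ : ℝ := (Real.sqrt ((2 * π) ^ d))⁻¹ with hc₀
  have hNpos : (0:ℝ) < (2 * π) ^ d := by positivity
  have hsqrt : Real.sqrt ((2 * π) ^ d) * Real.sqrt ((2 * π) ^ d) = (2 * π) ^ d :=
    Real.mul_self_sqrt hNpos.le
  have hsqrtpos : 0 < Real.sqrt ((2 * π) ^ d) := Real.sqrt_pos.2 hNpos
  have hc₀pos : 0 < c₀ := by rw [hc₀]; positivity
  set v : Zd d → Lp ℂ 2 μc := fun z => ((c₀ : ℂ)) • ((hmem z).toLp (eFun d z)) with hv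
  have hON : Orthonormal ℂ v := by
    rw [orthonormal_iff_ite]
    intro z w
    rw [hv]
    simp only
    rw [inner_smul_left, inner_smul_right, hinner z w, Complex.conj_ofReal]
    by_cases hzw : z = w
    · rw [if_pos hzw, if_pos hzw]
      have hr : c₀ * (c₀ * ((2 * π) ^ d)) = 1 := by
        rw [hc₀]
        field_simp
        rw [Real.sq_sqrt hNpos.le]
      calc ((c₀:ℂ)) * ((c₀:ℂ) * (((2 * π) ^ d : ℝ) : ℂ))
          = (((c₀ * (c₀ * ((2 * π) ^ d)) : ℝ)) : ℂ) := by push_cast; ring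
        _ = 1 := by rw [hr]; norm_num
    · rw [if_neg hzw, if_neg hzw, mul_zero, mul_zero]
  set g : Lp ℂ 2 μc := hgmem.toLp _ with hgdef
  have hsummable := hON.inner_products_summable (x := g)
  -- integrability of conj (e z) * Φ⁻¹
  have hJint : ∀ z : Zd d, Integrable
      (fun φ => conj (eFun d z φ) * ((Phi d φ : ℂ))⁻¹) μc := by
    intro z
    apply Integrable.mono (inv_Phi_integrableOn d (by omega))
    · exact (((Complex.continuous_conj.comp (eFun_continuous d z)).aestronglyMeasurable).mul
        hgmeas)
    · apply ae_of_all
      intro φ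
      rw [norm_mul, RCLike.norm_conj, eFun_norm, one_mul, norm_inv, Complex.norm_real,
        Real.norm_eq_abs, Real.norm_eq_abs, ← abs_inv]
  -- the inner products against g
  have hinner_g : ∀ z : Zd d, (inner ℂ (v z) g : ℂ)
      = (c₀ : ℂ) * ∫ φ, conj (eFun d z φ) * ((Phi d φ : ℂ))⁻¹ ∂μc := by
    intro z
    rw [hv]
    simp only
    rw [inner_smul_left, Complex.conj_ofReal]
    congr 1
    rw [hgdef, L2.inner_def]
    apply integral_congr_ae
    filter_upwards [(hmem z).coeFn_toLp, hgmem.coeFn_toLp] with a h1 h2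
    rw [h1, h2, RCLike.inner_apply']
  -- real parts give cInt
  have hre : ∀ z : Zd d,
      RCLike.re (∫ φ, conj (eFun d z φ) * ((Phi d φ : ℂ))⁻¹ ∂μc) = cInt d z := by
    intro z
    rw [← integral_re (hJint z)]
    have hpt : ∀ φ, RCLike.re (conj (eFun d z φ) * ((Phi d φ : ℂ))⁻¹)
        = Real.cos (thSum d z φ) / Phi d φ := by
      intro φ
      rw [conj_eFun, RCLike.re_to_complex, ← Complex.ofReal_inv, eFun]
      rw [Complex.mul_re]
      simp only [Complex.ofReal_re, Complex.ofReal_im, Complex.exp_ofReal_mul_I_re,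
        Complex.exp_ofReal_mul_I_im, mul_zero, sub_zero]
      rw [thSum_neg, Real.cos_neg, div_eq_mul_inv]
    simp_rw [hpt]
    rw [hμc, cInt]
  -- comparison
  have hbound : ∀ z : Zd d, (C * cInt d z) ^ 2
      ≤ (C / c₀) ^ 2 * ‖(inner ℂ (v z) g : ℂ)‖ ^ 2 := by
    intro z
    have h1 : ‖(inner ℂ (v z) g : ℂ)‖
        = c₀ * ‖∫ φ, conj (eFun d z φ) * ((Phi d φ : ℂ))⁻¹ ∂μc‖ := by
      rw [hinner_g, norm_mul, Complex.norm_real, Real.norm_eq_abs, abs_of_pos hc₀pos]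
    have h2 : |cInt d z| ≤ ‖∫ φ, conj (eFun d z φ) * ((Phi d φ : ℂ))⁻¹ ∂μc‖ := by
      rw [← hre z]
      exact RCLike.abs_re_le_norm _
    have h3 : (cInt d z) ^ 2 ≤ ‖∫ φ, conj (eFun d z φ) * ((Phi d φ : ℂ))⁻¹ ∂μc‖ ^ 2 := by
      rw [← sq_abs]
      exact pow_le_pow_left₀ (abs_nonneg _) h2 2
    have h4 : (C / c₀) ^ 2 * ‖(inner ℂ (v z) g : ℂ)‖ ^ 2
        = C ^ 2 * ‖∫ φ, conj (eFun d z φ) * ((Phi d φ : ℂ))⁻¹ ∂μc‖ ^ 2 := by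
      rw [h1]
      field_simp
    rw [h4, mul_pow]
    exact mul_le_mul_of_nonneg_left h3 (sq_nonneg C)
  exact Summable.of_nonneg_of_le (fun z => sq_nonneg _) hbound
    (hsummable.mul_left ((C / c₀) ^ 2))


/-- for `d ≥ 5` and the critical `β_d = 1/I(0)`, the function
`ψ(x) = β_d (2π)^{-d} ∫ cos⟨φ,x⟩/Φ(φ) dφ` is an `ℓ²(ℤ^d)` eigenfunction of `H_{β_d}` with
eigenvalue `0`, normalized so that `ψ(0) = 1`: the critical operator has `0` as an
`ℓ²`-eigenvalue at the edge of its essential spectrum. -/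
theorem critical_eigenfunction_high_dim (d : ℕ) (hd : 5 ≤ d) (βd : ℝ)
    (hβd : βd = (Ir d 0)⁻¹) :
    Memℓp (psiFun d βd 0) 2 ∧ psiFun d βd 0 0 = 1 ∧
      ∀ x : Zd d, Hform d βd (psiFun d βd 0) x = 0 := by
  have hd3 : 3 ≤ d := by omega
  refine ⟨?_, psi_zero_eq_one d hd3 βd hβd, fun x => Hform_eigen d hd3 βd hβd x⟩
  have hs := psi_summable_sq d hd (βd * ((2 * π) ^ d)⁻¹)
  apply memℓp_gen
  have hpt : ∀ z : Zd d, ‖psiFun d βd 0 z‖ ^ (2:ℝ≥0∞).toReal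
      = ((βd * ((2 * π) ^ d)⁻¹) * cInt d z) ^ 2 := by
    intro z
    rw [psiFun_eq]
    have h2 : (2:ℝ≥0∞).toReal = ((2:ℕ):ℝ) := by simp
    rw [h2, Real.rpow_natCast, Real.norm_eq_abs, sq_abs]
    ring
  exact (summable_congr hpt).2 hs
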